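/- Let G be a finite connected graph on n ≥ 2 vertices. The expected absorption time of the neutral Moran process (r = 1) on G is at most n⁴·(φ(G)² − φ'₀), where φ(G) = ∑_{x∈V} 1/deg(x) and φ'₀ = (1/n)∑_{x∈V} (deg x)^{-2}. In particular it is at most φ(G)²·n⁴ ≤ n⁶. -/

import Mathlib

open Finset

/-- Total fitness of the population when the mutant set is `S`:
`W(S) = r·|S| + (n - |S|) = n + (r-1)·|S|`. -/
noncomputable def moranW {V : Type*} [Fintype V] (r : ℝ) (S : Finset V) : ℝ :=
  r * S.card + ((Fintype.card V : ℝ) - S.card)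

/-- One-step transition probability of the Moran process on the graph `G` with mutant
fitness `r`: an individual `x` is chosen with probability proportional to its fitness
(`r` if `x ∈ S`, else `1`), and it reproduces onto a uniformly random neighbour `y`,
which becomes a mutant if `x` is a mutant and a non-mutant otherwise. -/
noncomputable def moranP {V : Type*} [Fintype V] [DecidableEq V] (G : SimpleGraph V)
    [DecidableRel G.Adj] (r : ℝ) (S T : Finset V) : ℝ :=
  ∑ x : V, ∑ y ∈ G.neighborFinset x,
    (if x ∈ S then r else 1) / (moranW r S * G.degree x) *
      (if (if x ∈ S then insert y S else S.erase y) = T then 1 else 0)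

/-- The potential function `φ(X) = ∑_{x ∈ X} 1/deg x`. -/
noncomputable def moranPhi {V : Type*} [Fintype V] (G : SimpleGraph V) [DecidableRel G.Adj]
    (X : Finset V) : ℝ :=
  ∑ x ∈ X, (1 : ℝ) / G.degree x


section aux
variable {V : Type*} [Fintype V] [DecidableEq V] (G : SimpleGraph V) [DecidableRel G.Adj]

lemma aux_sum_moranP_mul (S : Finset V) (F : Finset V → ℝ) :
    ∑ T : Finset V, moranP G 1 S T * F T
      = ∑ x : V, ∑ y ∈ G.neighborFinset x,
          1 / ((Fintype.card V : ℝ) * G.degree x) *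
            F (if x ∈ S then insert y S else S.erase y) := by
  have hW : moranW (1:ℝ) S = (Fintype.card V : ℝ) := by simp [moranW]
  unfold moranP
  simp only [Finset.sum_mul, hW, ite_self]
  rw [Finset.sum_comm]
  refine Finset.sum_congr rfl fun x _ => ?_
  rw [Finset.sum_comm]
  refine Finset.sum_congr rfl fun y _ => ?_
  simp [Finset.sum_ite_eq]

end aux

section aux2
variable {V : Type*} [Fintype V] [DecidableEq V] (G : SimpleGraph V) [DecidableRel G.Adj]

lemma aux_deg_pos (hG : G.Connected) (hn : 2 ≤ Fintype.card V) (x : V) :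
    0 < G.degree x := by
  obtain ⟨z, hz⟩ := Fintype.exists_ne_of_one_lt_card (by omega) x
  obtain ⟨p⟩ := hG.preconnected x z
  obtain ⟨d, _, hd1, hd2⟩ := p.exists_boundary_dart {x} rfl (by simpa using hz)
  rw [SimpleGraph.degree_pos_iff_exists_adj]
  exact ⟨d.snd, hd1 ▸ d.adj⟩

lemma aux_antisym (f : V → V → ℝ) (hf : ∀ x y, G.Adj x y → f y x = - f x y) :
    ∑ x : V, ∑ y ∈ G.neighborFinset x, f x y = 0 := by
  have h1 : ∑ x : V, ∑ y ∈ G.neighborFinset x, f x y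
      = ∑ x : V, ∑ y : V, if G.Adj x y then f x y else 0 := by
    refine Finset.sum_congr rfl fun x _ => ?_
    rw [SimpleGraph.neighborFinset_eq_filter, Finset.sum_filter]
  have h2 : ∑ x : V, ∑ y : V, (if G.Adj x y then f x y else 0)
      = - ∑ x : V, ∑ y : V, (if G.Adj x y then f x y else 0) := by
    nth_rewrite 1 [Finset.sum_comm]
    rw [← Finset.sum_neg_distrib]
    refine Finset.sum_congr rfl fun x _ => ?_
    rw [← Finset.sum_neg_distrib]
    refine Finset.sum_congr rfl fun y _ => ?_
    by_cases hadj : G.Adj x y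
    · simp [hadj, hadj.symm, hf _ _ hadj]
    · have : ¬ G.Adj y x := fun h => hadj h.symm
      simp [hadj, this]
  have := h1 ▸ h2
  linarith [this]

end aux2

section aux3
set_option linter.unusedSectionVars false
variable {V : Type*} [Fintype V] [DecidableEq V] (G : SimpleGraph V) [DecidableRel G.Adj]

lemma aux_phi_step (S : Finset V) (x y : V) :
    moranPhi G (if x ∈ S then insert y S else S.erase y) - moranPhi G S
      = if x ∈ S then (if y ∈ S then 0 else 1 / (G.degree y : ℝ))
        else (if y ∈ S then -(1 / (G.degree y : ℝ)) else 0) := by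
  by_cases hx : x ∈ S <;> by_cases hy : y ∈ S
  · simp [hx, hy, Finset.insert_eq_self.mpr hy]
  · simp [hx, hy, moranPhi, Finset.sum_insert hy]
  · simp only [hx, if_neg, if_pos hy, ite_false, moranPhi]
    rw [Finset.sum_erase_eq_sub hy]
    ring
  · simp [hx, hy, Finset.erase_eq_of_notMem hy]

lemma aux_P_nonneg (S T : Finset V) : 0 ≤ moranP G 1 S T := by
  unfold moranP
  refine Finset.sum_nonneg fun x _ => Finset.sum_nonneg fun y _ => ?_
  refine mul_nonneg (div_nonneg ?_ ?_) ?_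
  · split_ifs <;> norm_num
  · have h1 : (0:ℝ) ≤ moranW 1 S := by
      simp only [moranW, one_mul]
      have := Finset.card_le_univ S
      have : (S.card : ℝ) ≤ Fintype.card V := by exact_mod_cast this
      linarith
    positivity
  · split_ifs <;> norm_num

lemma aux_csum (hG : G.Connected) (hn : 2 ≤ Fintype.card V) :
    ∑ x : V, ∑ y ∈ G.neighborFinset x,
      1 / ((Fintype.card V : ℝ) * G.degree x) = 1 := by
  have hn0 : (0:ℝ) < Fintype.card V := by positivity
  have hx : ∀ x : V, ∑ y ∈ G.neighborFinset x,
      1 / ((Fintype.card V : ℝ) * G.degree x) = 1 / Fintype.card V := by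
    intro x
    rw [Finset.sum_const, SimpleGraph.card_neighborFinset_eq_degree, nsmul_eq_mul]
    have hd : (0:ℝ) < G.degree x := by exact_mod_cast aux_deg_pos G hG hn x
    field_simp
  simp only [hx]
  rw [Finset.sum_const, Finset.card_univ, nsmul_eq_mul]
  field_simp

lemma aux_boundary (hG : G.Connected) (S : Finset V) (h0 : S ≠ ∅) (h1 : S ≠ Finset.univ) :
    ∃ x y, x ∈ S ∧ y ∉ S ∧ G.Adj x y := by
  obtain ⟨a, ha⟩ := Finset.nonempty_iff_ne_empty.mpr h0
  obtain ⟨b, hb⟩ : ∃ b, b ∉ S := by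
    by_contra hc
    push_neg at hc
    exact h1 (Finset.eq_univ_iff_forall.mpr hc)
  obtain ⟨p⟩ := hG.preconnected a b
  obtain ⟨d, _, h1', h2'⟩ := p.exists_boundary_dart (↑S : Set V) (by simpa using ha)
    (by simpa using hb)
  exact ⟨d.fst, d.snd, by simpa using h1', by simpa using h2', d.adj⟩

lemma aux_P_pos (hG : G.Connected) (hn : 2 ≤ Fintype.card V) (S : Finset V) (x y : V)
    (hx : x ∈ S) (hy : y ∉ S) (hadj : G.Adj x y) :
    0 < moranP G 1 S (insert y S) := by
  have hW : moranW (1:ℝ) S = (Fintype.card V : ℝ) := by simp [moranW]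
  unfold moranP
  refine Finset.sum_pos' (fun a _ => Finset.sum_nonneg fun b _ => ?_) ⟨x, Finset.mem_univ x, ?_⟩
  · refine mul_nonneg (div_nonneg ?_ ?_) ?_
    · split_ifs <;> norm_num
    · rw [hW]; positivity
    · split_ifs <;> norm_num
  · refine Finset.sum_pos' (fun b _ => ?_) ⟨y, ?_, ?_⟩
    · refine mul_nonneg (div_nonneg ?_ ?_) ?_
      · split_ifs <;> norm_num
      · rw [hW]; positivity
      · split_ifs <;> norm_num
    · rwa [SimpleGraph.mem_neighborFinset]
    · have hd : (0:ℝ) < G.degree x := by exact_mod_cast aux_deg_pos G hG hn x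
      have hn0 : (0:ℝ) < Fintype.card V := by positivity
      simp only [hx, if_pos, hW, if_true]
      positivity

end aux3

noncomputable def moranPsi {V : Type*} [Fintype V] (G : SimpleGraph V) [DecidableRel G.Adj]
    (S : Finset V) : ℝ :=
  (Fintype.card V : ℝ) ^ 4 *
    (moranPhi G S * (moranPhi G Finset.univ - moranPhi G S))

section aux4
set_option linter.unusedSectionVars false
variable {V : Type*} [Fintype V] [DecidableEq V] (G : SimpleGraph V) [DecidableRel G.Adj]

lemma aux_martingale (S : Finset V) :
    ∑ x : V, ∑ y ∈ G.neighborFinset x,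
      1 / ((Fintype.card V : ℝ) * G.degree x) *
        (moranPhi G (if x ∈ S then insert y S else S.erase y) - moranPhi G S) = 0 := by
  apply aux_antisym
  intro x y hadj
  rw [aux_phi_step, aux_phi_step]
  by_cases hx : x ∈ S <;> by_cases hy : y ∈ S <;> simp [hx, hy] <;> ring

lemma aux_var (hG : G.Connected) (hn : 2 ≤ Fintype.card V) (S : Finset V)
    (h0 : S ≠ ∅) (h1 : S ≠ Finset.univ) :
    1 / (Fintype.card V : ℝ) ^ 4 ≤
      ∑ x : V, ∑ y ∈ G.neighborFinset x,
        1 / ((Fintype.card V : ℝ) * G.degree x) *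
          (moranPhi G (if x ∈ S then insert y S else S.erase y) - moranPhi G S) ^ 2 := by
  obtain ⟨x, y, hx, hy, hadj⟩ := aux_boundary G hG S h0 h1
  have hterm_nonneg : ∀ a ∈ (Finset.univ : Finset V), 0 ≤ ∑ b ∈ G.neighborFinset a,
      1 / ((Fintype.card V : ℝ) * G.degree a) *
        (moranPhi G (if a ∈ S then insert b S else S.erase b) - moranPhi G S) ^ 2 := by
    intro a _
    refine Finset.sum_nonneg fun b _ => mul_nonneg ?_ (sq_nonneg _)
    positivity
  refine le_trans ?_ (Finset.single_le_sum hterm_nonneg (Finset.mem_univ x))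
  have hinner : ∀ b ∈ G.neighborFinset x, (0:ℝ) ≤
      1 / ((Fintype.card V : ℝ) * G.degree x) *
        (moranPhi G (if x ∈ S then insert b S else S.erase b) - moranPhi G S) ^ 2 := by
    intro b _
    refine mul_nonneg ?_ (sq_nonneg _)
    positivity
  refine le_trans ?_
    (Finset.single_le_sum hinner (by rwa [SimpleGraph.mem_neighborFinset]))
  rw [aux_phi_step, if_pos hx, if_neg hy]
  have hdx : (1:ℝ) ≤ G.degree x := by exact_mod_cast aux_deg_pos G hG hn x
  have hdy : (1:ℝ) ≤ G.degree y := by exact_mod_cast aux_deg_pos G hG hn y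
  have hdx' : (G.degree x : ℝ) ≤ Fintype.card V := by
    exact_mod_cast (G.degree_lt_card_verts x).le
  have hdy' : (G.degree y : ℝ) ≤ Fintype.card V := by
    exact_mod_cast (G.degree_lt_card_verts y).le
  have hn0 : (2:ℝ) ≤ Fintype.card V := by exact_mod_cast hn
  rw [div_pow, div_mul_div_comm, one_pow, mul_one]
  apply one_div_le_one_div_of_le
  · positivity
  · calc (Fintype.card V : ℝ) * G.degree x * (G.degree y : ℝ)^2
        ≤ (Fintype.card V : ℝ) * Fintype.card V * ((Fintype.card V : ℝ))^2 := by
          have h2 : (0:ℝ) < Fintype.card V := by linarith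
          have := sq_nonneg ((G.degree y : ℝ))
          gcongr <;> linarith
      _ = (Fintype.card V : ℝ)^4 := by ring

end aux4

section aux5
set_option linter.unusedSectionVars false
variable {V : Type*} [Fintype V] [DecidableEq V] (G : SimpleGraph V) [DecidableRel G.Adj]

lemma aux_phiT (hG : G.Connected) (hn : 2 ≤ Fintype.card V) (S : Finset V) :
    ∑ T : Finset V, moranP G 1 S T * moranPhi G T = moranPhi G S := by
  rw [aux_sum_moranP_mul G S (fun T => moranPhi G T)]
  have key : (∑ x : V, ∑ y ∈ G.neighborFinset x,
        1 / ((Fintype.card V : ℝ) * G.degree x) *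
          moranPhi G (if x ∈ S then insert y S else S.erase y))
      = (∑ x : V, ∑ y ∈ G.neighborFinset x,
          1 / ((Fintype.card V : ℝ) * G.degree x)) * moranPhi G S
        + ∑ x : V, ∑ y ∈ G.neighborFinset x,
            1 / ((Fintype.card V : ℝ) * G.degree x) *
              (moranPhi G (if x ∈ S then insert y S else S.erase y) - moranPhi G S) := by
    rw [Finset.sum_mul, ← Finset.sum_add_distrib]
    refine Finset.sum_congr rfl fun x _ => ?_
    rw [Finset.sum_mul, ← Finset.sum_add_distrib]
    exact Finset.sum_congr rfl fun y _ => by ring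
  rw [key, aux_csum G hG hn, aux_martingale G S, one_mul, add_zero]

lemma aux_phiT2 (hG : G.Connected) (hn : 2 ≤ Fintype.card V) (S : Finset V)
    (h0 : S ≠ ∅) (h1 : S ≠ Finset.univ) :
    moranPhi G S ^ 2 + 1 / (Fintype.card V : ℝ) ^ 4 ≤
      ∑ T : Finset V, moranP G 1 S T * moranPhi G T ^ 2 := by
  rw [aux_sum_moranP_mul G S (fun T => moranPhi G T ^ 2)]
  have key : (∑ x : V, ∑ y ∈ G.neighborFinset x,
        1 / ((Fintype.card V : ℝ) * G.degree x) *
          moranPhi G (if x ∈ S then insert y S else S.erase y) ^ 2)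
      = (∑ x : V, ∑ y ∈ G.neighborFinset x,
          1 / ((Fintype.card V : ℝ) * G.degree x)) * moranPhi G S ^ 2
        + 2 * moranPhi G S * (∑ x : V, ∑ y ∈ G.neighborFinset x,
            1 / ((Fintype.card V : ℝ) * G.degree x) *
              (moranPhi G (if x ∈ S then insert y S else S.erase y) - moranPhi G S))
        + ∑ x : V, ∑ y ∈ G.neighborFinset x,
            1 / ((Fintype.card V : ℝ) * G.degree x) *
              (moranPhi G (if x ∈ S then insert y S else S.erase y) - moranPhi G S) ^ 2 := by
    rw [Finset.sum_mul, Finset.mul_sum, ← Finset.sum_add_distrib, ← Finset.sum_add_distrib]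
    refine Finset.sum_congr rfl fun x _ => ?_
    rw [Finset.sum_mul, Finset.mul_sum, ← Finset.sum_add_distrib, ← Finset.sum_add_distrib]
    exact Finset.sum_congr rfl fun y _ => by ring
  rw [key, aux_csum G hG hn, aux_martingale G S, one_mul, mul_zero, add_zero]
  have := aux_var G hG hn S h0 h1
  linarith

lemma aux_step (hG : G.Connected) (hn : 2 ≤ Fintype.card V) (S : Finset V)
    (h0 : S ≠ ∅) (h1 : S ≠ Finset.univ) :
    1 + ∑ T : Finset V, moranP G 1 S T * moranPsi G T ≤ moranPsi G S := by
  have hexp : ∑ T : Finset V, moranP G 1 S T * moranPsi G T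
      = (Fintype.card V : ℝ) ^ 4 *
          (moranPhi G Finset.univ * (∑ T : Finset V, moranP G 1 S T * moranPhi G T)
            - ∑ T : Finset V, moranP G 1 S T * moranPhi G T ^ 2) := by
    have hpt : ∀ T : Finset V, moranP G 1 S T * moranPsi G T
        = (Fintype.card V : ℝ) ^ 4 *
            (moranPhi G Finset.univ * (moranP G 1 S T * moranPhi G T)
              - moranP G 1 S T * moranPhi G T ^ 2) := by
      intro T; unfold moranPsi; ring
    rw [Finset.sum_congr rfl fun T _ => hpt T, ← Finset.mul_sum, Finset.sum_sub_distrib,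
      ← Finset.mul_sum]
  rw [hexp, aux_phiT G hG hn S]
  have h4 : (0:ℝ) < (Fintype.card V : ℝ) ^ 4 := by
    have : 0 < Fintype.card V := by omega
    positivity
  have hX := aux_phiT2 G hG hn S h0 h1
  have e1 := mul_le_mul_of_nonneg_left hX h4.le
  have e3 : (Fintype.card V : ℝ) ^ 4 * (moranPhi G S ^ 2 + 1 / (Fintype.card V : ℝ) ^ 4)
      = (Fintype.card V : ℝ) ^ 4 * moranPhi G S ^ 2 + 1 := by
    field_simp
  unfold moranPsi
  nlinarith [e1, e3]

end aux5

section aux6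
set_option linter.unusedSectionVars false
variable {V : Type*} [Fintype V] [DecidableEq V] (G : SimpleGraph V) [DecidableRel G.Adj]

lemma aux_rowsum (hG : G.Connected) (hn : 2 ≤ Fintype.card V) (S : Finset V) :
    ∑ T : Finset V, moranP G 1 S T = 1 := by
  have h1 : (∑ T : Finset V, moranP G 1 S T)
      = ∑ T : Finset V, moranP G 1 S T * (fun _ => (1:ℝ)) T := by simp
  rw [h1, aux_sum_moranP_mul]
  simp only [mul_one]
  exact aux_csum G hG hn

lemma aux_max (hG : G.Connected) (hn : 2 ≤ Fintype.card V)
    (h : Finset V → ℝ) (habs0 : h ∅ = 0) (habs1 : h Finset.univ = 0)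
    (hrec : ∀ S : Finset V, S ≠ ∅ → S ≠ Finset.univ →
      h S = 1 + ∑ T : Finset V, moranP G 1 S T * h T) :
    ∀ S, h S ≤ moranPsi G S := by
  obtain ⟨S₀, -, hS₀⟩ := Finset.exists_max_image (Finset.univ : Finset (Finset V))
    (fun S => h S - moranPsi G S) ⟨∅, Finset.mem_univ ∅⟩
  suffices hM : h S₀ - moranPsi G S₀ ≤ 0 by
    intro S
    have := hS₀ S (Finset.mem_univ S)
    linarith
  have claim : ∀ k : ℕ, ∀ S : Finset V, Fintype.card V ≤ S.card + k →
      h S - moranPsi G S = h S₀ - moranPsi G S₀ → h S₀ - moranPsi G S₀ ≤ 0 := by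
    intro k
    induction k with
    | zero =>
      intro S hcard hfS
      have hSu : S = Finset.univ := Finset.eq_univ_of_card S (by
        have := Finset.card_le_univ S
        omega)
      rw [hSu] at hfS
      rw [← hfS, habs1]
      simp [moranPsi]
    | succ k ih =>
      intro S hcard hfS
      by_cases hSu : S = Finset.univ
      · rw [hSu] at hfS
        rw [← hfS, habs1]
        simp [moranPsi]
      by_cases hS0 : S = ∅
      · rw [hS0] at hfS
        rw [← hfS, habs0]
        simp [moranPsi, moranPhi]
      · obtain ⟨x, y, hx, hy, hadj⟩ := aux_boundary G hG S hS0 hSu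
        set M := h S₀ - moranPsi G S₀ with hMdef
        have hfa : ∀ T, h T - moranPsi G T ≤ M := fun T => hS₀ T (Finset.mem_univ T)
        have hrow := aux_rowsum G hG hn S
        have hPn : ∀ T, 0 ≤ moranP G 1 S T := aux_P_nonneg G S
        have hle : M ≤ ∑ T : Finset V, moranP G 1 S T * (h T - moranPsi G T) := by
          have e1 := hrec S hS0 hSu
          have e2 := aux_step G hG hn S hS0 hSu
          have e3 : ∑ T : Finset V, moranP G 1 S T * (h T - moranPsi G T)
              = (∑ T : Finset V, moranP G 1 S T * h T)
                - ∑ T : Finset V, moranP G 1 S T * moranPsi G T := by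
            rw [← Finset.sum_sub_distrib]
            exact Finset.sum_congr rfl fun T _ => by ring
          rw [e3, ← hfS]
          linarith
        have hub : ∑ T : Finset V, moranP G 1 S T * (h T - moranPsi G T) ≤ M := by
          calc ∑ T : Finset V, moranP G 1 S T * (h T - moranPsi G T)
              ≤ ∑ T : Finset V, moranP G 1 S T * M :=
                Finset.sum_le_sum fun T _ => mul_le_mul_of_nonneg_left (hfa T) (hPn T)
            _ = M := by rw [← Finset.sum_mul, hrow, one_mul]
        have hzero : ∑ T : Finset V, moranP G 1 S T * (M - (h T - moranPsi G T)) = 0 := by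
          have e4 : ∑ T : Finset V, moranP G 1 S T * (M - (h T - moranPsi G T))
              = (∑ T : Finset V, moranP G 1 S T * M)
                - ∑ T : Finset V, moranP G 1 S T * (h T - moranPsi G T) := by
            rw [← Finset.sum_sub_distrib]
            exact Finset.sum_congr rfl fun T _ => by ring
          rw [e4, ← Finset.sum_mul, hrow, one_mul]
          linarith
        have hterm := (Finset.sum_eq_zero_iff_of_nonneg
          (fun T _ => mul_nonneg (hPn T) (by linarith [hfa T]))).mp hzero
        have hT0 := hterm (insert y S) (Finset.mem_univ _)
        have hPpos := aux_P_pos G hG hn S x y hx hy hadj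
        have hfT0 : h (insert y S) - moranPsi G (insert y S) = M := by
          rcases mul_eq_zero.mp hT0 with hc | hc
          · exact absurd hc hPpos.ne'
          · linarith
        exact ih (insert y S) (by rw [Finset.card_insert_of_notMem hy]; omega) hfT0
  exact claim (Fintype.card V) S₀ (by omega) rfl

end aux6

/-- For a finite connected graph on `n ≥ 2` vertices, the expected absorption time of the
neutral (`r = 1`) Moran process with a uniformly random initial mutant is at most
`n⁴·(φ(G)² - φ'₀)`, where `φ(G) = ∑_{x ∈ V} 1/deg x` and `φ'₀ = (1/n)·∑_{x ∈ V} (deg x)⁻²`;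
in particular it is at most `φ(G)²·n⁴ ≤ n⁶`. -/
theorem stmt_14 {V : Type*} [Fintype V] [DecidableEq V] (G : SimpleGraph V)
    [DecidableRel G.Adj] (hG : G.Connected) (hn : 2 ≤ Fintype.card V)
    (h : Finset V → ℝ) (hpos : ∀ S, 0 ≤ h S)
    (habs0 : h ∅ = 0) (habs1 : h Finset.univ = 0)
    (hrec : ∀ S : Finset V, S ≠ ∅ → S ≠ Finset.univ →
      h S = 1 + ∑ T : Finset V, moranP G 1 S T * h T) :
    (1 / (Fintype.card V : ℝ)) * ∑ x : V, h {x} ≤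
        (Fintype.card V : ℝ) ^ 4 *
          (moranPhi G Finset.univ ^ 2 -
            (1 / (Fintype.card V : ℝ)) * ∑ x : V, ((G.degree x : ℝ))⁻¹ ^ 2) ∧
    (Fintype.card V : ℝ) ^ 4 *
        (moranPhi G Finset.univ ^ 2 -
          (1 / (Fintype.card V : ℝ)) * ∑ x : V, ((G.degree x : ℝ))⁻¹ ^ 2) ≤
      moranPhi G Finset.univ ^ 2 * (Fintype.card V : ℝ) ^ 4 ∧
    moranPhi G Finset.univ ^ 2 * (Fintype.card V : ℝ) ^ 4 ≤ (Fintype.card V : ℝ) ^ 6 := by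
  have hncast : (2:ℝ) ≤ (Fintype.card V : ℝ) := by exact_mod_cast hn
  have hn0 : (0:ℝ) < (Fintype.card V : ℝ) := by linarith
  have h4 : (0:ℝ) < (Fintype.card V : ℝ) ^ 4 := by positivity
  have hmax := aux_max G hG hn h habs0 habs1 hrec
  have hdeg1 : ∀ x : V, (1:ℝ) ≤ G.degree x := fun x => by
    exact_mod_cast aux_deg_pos G hG hn x
  have hA0 : 0 ≤ moranPhi G Finset.univ := by
    refine Finset.sum_nonneg fun x _ => ?_
    have := hdeg1 x
    positivity
  have hAn : moranPhi G Finset.univ ≤ (Fintype.card V : ℝ) := by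
    unfold moranPhi
    calc ∑ x ∈ Finset.univ, (1:ℝ) / G.degree x
        ≤ ∑ _x ∈ (Finset.univ : Finset V), (1:ℝ) :=
          Finset.sum_le_sum fun x _ => by
            rw [div_le_one (by linarith [hdeg1 x])]
            exact hdeg1 x
      _ = (Fintype.card V : ℝ) := by simp
  have hB0 : (0:ℝ) ≤ ∑ x : V, ((G.degree x : ℝ))⁻¹ ^ 2 :=
    Finset.sum_nonneg fun x _ => by positivity
  have hψx : ∀ x : V, moranPsi G {x}
      = (Fintype.card V : ℝ) ^ 4 *
          (((G.degree x : ℝ))⁻¹ * moranPhi G Finset.univ - ((G.degree x : ℝ))⁻¹ ^ 2) := by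
    intro x
    have h1 : moranPhi G {x} = ((G.degree x : ℝ))⁻¹ := by simp [moranPhi]
    unfold moranPsi
    rw [h1]
    ring
  have hAdef : moranPhi G Finset.univ = ∑ x : V, ((G.degree x : ℝ))⁻¹ := by
    simp [moranPhi]
  have hsum : ∑ x : V, moranPsi G {x}
      = (Fintype.card V : ℝ) ^ 4 *
          (moranPhi G Finset.univ * moranPhi G Finset.univ
            - ∑ x : V, ((G.degree x : ℝ))⁻¹ ^ 2) := by
    rw [Finset.sum_congr rfl fun x _ => hψx x, ← Finset.mul_sum, Finset.sum_sub_distrib,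
      ← Finset.sum_mul, ← hAdef]
  have hinv1 : 1 / (Fintype.card V : ℝ) ≤ 1 := by
    rw [div_le_one hn0]
    linarith
  refine ⟨?_, ?_, ?_⟩
  · calc (1 / (Fintype.card V : ℝ)) * ∑ x : V, h {x}
        ≤ (1 / (Fintype.card V : ℝ)) * ∑ x : V, moranPsi G {x} :=
          mul_le_mul_of_nonneg_left (Finset.sum_le_sum fun x _ => hmax {x}) (by positivity)
      _ = (1 / (Fintype.card V : ℝ)) * ((Fintype.card V : ℝ) ^ 4 *
            (moranPhi G Finset.univ * moranPhi G Finset.univ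
              - ∑ x : V, ((G.degree x : ℝ))⁻¹ ^ 2)) := by rw [hsum]
      _ ≤ (Fintype.card V : ℝ) ^ 4 *
            (moranPhi G Finset.univ ^ 2 -
              (1 / (Fintype.card V : ℝ)) * ∑ x : V, ((G.degree x : ℝ))⁻¹ ^ 2) := by
          nlinarith [mul_nonneg (mul_nonneg h4.le (mul_self_nonneg (moranPhi G Finset.univ)))
            (sub_nonneg.mpr hinv1)]
  · have e : (Fintype.card V : ℝ) ^ 4 *
        (moranPhi G Finset.univ ^ 2 -
          (1 / (Fintype.card V : ℝ)) * ∑ x : V, ((G.degree x : ℝ))⁻¹ ^ 2)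
        = moranPhi G Finset.univ ^ 2 * (Fintype.card V : ℝ) ^ 4
          - (Fintype.card V : ℝ) ^ 4 *
              ((1 / (Fintype.card V : ℝ)) * ∑ x : V, ((G.degree x : ℝ))⁻¹ ^ 2) := by
      ring
    rw [e]
    have : 0 ≤ (Fintype.card V : ℝ) ^ 4 *
        ((1 / (Fintype.card V : ℝ)) * ∑ x : V, ((G.degree x : ℝ))⁻¹ ^ 2) := by positivity
    linarith
  · nlinarith [mul_le_mul_of_nonneg_right
      (mul_self_le_mul_self hA0 hAn) h4.le]
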